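/- Canonical finite decomposition of a valued deformation of a Lie algebra: let μ₀ be a Lie bracket on ℂⁿ, let A be a deformation ring over ℂ with maximal ideal m, and let μ be an A-bilinear, antisymmetric map Aⁿ × Aⁿ → Aⁿ satisfying the Jacobi identity, such that for all standard basis vectors e_i, e_j of ℂⁿ ⊂ Aⁿ every coordinate of μ(e_i, e_j) − μ₀(e_i, e_j) lies in m. Then there exist an integer k, elements ε₁, ε₂, …, ε_k ∈ m, and linearly independent alternating bilinear maps φ₁, …, φ_k : ℂⁿ × ℂⁿ → ℂⁿ such that for all X, Y ∈ ℂⁿ, μ(X,Y) = μ₀(X,Y) + ε₁·φ₁(X,Y) + ε₁ε₂·φ₂(X,Y) + ⋯ + ε₁ε₂⋯ε_k·φ_k(X,Y), where elements of ℂⁿ are viewed in Aⁿ via ℂ → A componentwise. -/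

import Mathlib

/-- A bilinear alternating (antisymmetric) map `ℂⁿ × ℂⁿ → ℂⁿ`. -/
def IsAltBilinearMap (n : ℕ) (φ : (Fin n → ℂ) → (Fin n → ℂ) → (Fin n → ℂ)) : Prop :=
  (∀ X X' Y, φ (X + X') Y = φ X Y + φ X' Y) ∧
  (∀ (c : ℂ) X Y, φ (c • X) Y = c • φ X Y) ∧
  (∀ X Y Y', φ X (Y + Y') = φ X Y + φ X Y') ∧
  (∀ (c : ℂ) X Y, φ X (c • Y) = c • φ X Y) ∧
  (∀ X Y, φ X Y = - φ Y X)

/-- The componentwise embedding `ℂⁿ → Aⁿ` induced by the structure map `ℂ → A`. -/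
def embed (A : Type) [CommRing A] [Algebra ℂ A] (n : ℕ) (x : Fin n → ℂ) : Fin n → A :=
  fun j => algebraMap ℂ A (x j)

open Finset

lemma Iic_succ_eq {k : ℕ} (i : Fin k) :
    Finset.Iic (i.succ) = insert (0 : Fin (k+1)) ((Finset.Iic i).map (Fin.succEmb k)) := by
  ext a
  simp only [Finset.mem_Iic, Finset.mem_insert, Finset.mem_map]
  constructor
  · intro h
    rcases Fin.eq_zero_or_eq_succ a with rfl | ⟨b, rfl⟩
    · exact Or.inl rfl
    · exact Or.inr ⟨b, by simpa [Fin.succ_le_succ_iff] using h, rfl⟩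
  · rintro (rfl | ⟨b, hb, rfl⟩)
    · exact Fin.zero_le _
    · exact Fin.succ_le_succ_iff.mpr (by simpa using hb)

lemma prod_Iic_cons {M : Type*} [CommMonoid M] {k : ℕ} (x : M) (g : Fin k → M) (i : Fin k) :
    (∏ l ∈ Finset.Iic (i.succ), (Fin.cons x g : Fin (k+1) → M) l)
      = x * ∏ l ∈ Finset.Iic i, g l := by
  rw [Iic_succ_eq, Finset.prod_insert, Finset.prod_map]
  · simp [Fin.succEmb]
  · simp [Fin.succEmb, Fin.succ_ne_zero]

lemma finset_exists_dvd_all {A : Type} [CommRing A] [IsDomain A] [ValuationRing A]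
    (s : Finset A) : s.Nonempty → ∃ a ∈ s, ∀ b ∈ s, a ∣ b := by
  classical
  induction s using Finset.induction_on with
  | empty => rintro ⟨a, ha⟩; simp at ha
  | @insert x s hx ih =>
    intro _
    rcases s.eq_empty_or_nonempty with rfl | hne
    · exact ⟨x, Finset.mem_insert_self _ _, by simp⟩
    · obtain ⟨a, ha, hall⟩ := ih hne
      rcases ValuationRing.dvd_total a x with h | h
      · refine ⟨a, Finset.mem_insert_of_mem ha, ?_⟩
        intro b hb
        rcases Finset.mem_insert.mp hb with rfl | hb
        exacts [h, hall b hb]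
      · refine ⟨x, Finset.mem_insert_self _ _, ?_⟩
        intro b hb
        rcases Finset.mem_insert.mp hb with rfl | hb
        exacts [dvd_rfl, h.trans (hall b hb)]

lemma bilin_expand {R M : Type*} [CommSemiring R] [AddCommMonoid M] [Module R M]
    (μ : M → M → M)
    (hadd₁ : ∀ X X' Y, μ (X + X') Y = μ X Y + μ X' Y)
    (hsmul₁ : ∀ (a : R) X Y, μ (a • X) Y = a • μ X Y)
    (hadd₂ : ∀ X Y Y', μ X (Y + Y') = μ X Y + μ X Y')
    (hsmul₂ : ∀ (a : R) X Y, μ X (a • Y) = a • μ X Y)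
    {ι₁ ι₂ : Type*} (s : Finset ι₁) (t : Finset ι₂) (f : ι₁ → R) (g : ι₂ → R)
    (x : ι₁ → M) (y : ι₂ → M) :
    μ (∑ a ∈ s, f a • x a) (∑ b ∈ t, g b • y b)
      = ∑ a ∈ s, ∑ b ∈ t, (f a * g b) • μ (x a) (y b) := by
  let B : M →ₗ[R] M →ₗ[R] M := LinearMap.mk₂ R μ hadd₁ hsmul₁ hadd₂ hsmul₂
  show B (∑ a ∈ s, f a • x a) (∑ b ∈ t, g b • y b) = _
  simp only [map_sum, LinearMap.sum_apply, map_smul, LinearMap.smul_apply, Finset.smul_sum,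
    smul_smul]
  rw [Finset.sum_comm]
  exact Finset.sum_congr rfl fun a _ => Finset.sum_congr rfl fun b _ => by rw [mul_comm]; rfl

lemma key_decomp (A : Type) [CommRing A] [IsDomain A] [ValuationRing A] [Algebra ℂ A]
    (hres : Function.Bijective ((IsLocalRing.residue A).comp (algebraMap ℂ A))) :
    ∀ (N : ℕ) (ι : Type) (_ : Fintype ι), Fintype.card ι ≤ N →
    ∀ (v : ι → A), (∀ α, v α ∈ IsLocalRing.maximalIdeal A) →
    ∃ (k : ℕ) (ε : Fin k → A) (w : Fin k → (ι → ℂ)),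
      (∀ i, ε i ∈ IsLocalRing.maximalIdeal A) ∧ LinearIndependent ℂ w ∧
      ∀ α, v α = ∑ i, (∏ l ∈ Finset.Iic i, ε l) * algebraMap ℂ A (w i α) := by
  intro N
  induction N with
  | zero =>
    intro ι inst hcard v hv
    refine ⟨0, Fin.elim0, Fin.elim0, fun i => i.elim0, linearIndependent_empty_type, fun α => ?_⟩
    have : IsEmpty ι := Fintype.card_eq_zero_iff.mp (Nat.le_zero.mp hcard)
    exact this.elim α
  | succ N IH =>
    intro ι inst hcard v hv
    classical
    by_cases hz : ∀ α, v α = 0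
    · exact ⟨0, Fin.elim0, Fin.elim0, fun i => i.elim0, linearIndependent_empty_type,
        fun α => by simp [hz α]⟩
    push_neg at hz
    obtain ⟨α₁, hα₁⟩ := hz
    -- a coordinate of minimal valuation
    obtain ⟨a, hamem, hall⟩ := finset_exists_dvd_all (Finset.univ.image v)
      ⟨v α₁, Finset.mem_image_of_mem v (Finset.mem_univ α₁)⟩
    obtain ⟨α₀, -, rfl⟩ := Finset.mem_image.mp hamem
    have hdvd : ∀ α, v α₀ ∣ v α := fun α =>
      hall (v α) (Finset.mem_image_of_mem v (Finset.mem_univ α))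
    have ht0 : v α₀ ≠ 0 := by
      intro h
      exact hα₁ (zero_dvd_iff.mp (h ▸ hdvd α₁))
    choose u hu using hdvd
    have hu0 : u α₀ = 1 := by
      have := hu α₀
      nth_rewrite 1 [← mul_one (v α₀)] at this
      exact (mul_left_cancel₀ ht0 this).symm
    -- residue map back to ℂ
    let e : ℂ ≃ IsLocalRing.ResidueField A := Equiv.ofBijective _ hres
    let r : A → ℂ := fun x => e.symm (IsLocalRing.residue A x)
    have hr : ∀ x : A, x - algebraMap ℂ A (r x) ∈ IsLocalRing.maximalIdeal A := by
      intro x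
      have h1 : IsLocalRing.residue A (algebraMap ℂ A (r x)) = IsLocalRing.residue A x :=
        e.apply_symm_apply (IsLocalRing.residue A x)
      have : IsLocalRing.residue A (x - algebraMap ℂ A (r x)) = 0 := by
        rw [map_sub, h1, sub_self]
      exact (Ideal.Quotient.eq_zero_iff_mem).mp this
    have hr1 : r 1 = 1 := by
      have : e 1 = IsLocalRing.residue A 1 := by
        show IsLocalRing.residue A (algebraMap ℂ A 1) = _
        rw [map_one]
      simp only [r]
      rw [← this, Equiv.symm_apply_apply]
    let w₁ : ι → ℂ := fun α => r (u α)
    have hw₁0 : w₁ α₀ = 1 := by simp only [w₁, hu0, hr1]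
    let v' : ι → A := fun α => u α - algebraMap ℂ A (w₁ α)
    have hv'm : ∀ α, v' α ∈ IsLocalRing.maximalIdeal A := fun α => hr (u α)
    have hv'0 : v' α₀ = 0 := by simp [v', hu0, hw₁0]
    -- recurse on the complement of α₀
    let ι' := {α : ι // α ≠ α₀}
    have hcard' : Fintype.card ι' ≤ N := by
      have h1 : Fintype.card ι' < Fintype.card ι :=
        Fintype.card_subtype_lt (x := α₀) (by simp)
      omega
    obtain ⟨k', η, ws, hη, hws, hsum⟩ :=
      IH ι' inferInstance hcard' (fun β => v' β.1) (fun β => hv'm β.1)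
    let ext0 : (ι' → ℂ) → (ι → ℂ) := fun x α => if h : α = α₀ then 0 else x ⟨α, h⟩
    refine ⟨k' + 1, Fin.cons (v α₀) η, Fin.cons w₁ (fun i => ext0 (ws i)), ?_, ?_, ?_⟩
    · intro i
      induction i using Fin.cases with
      | zero => simpa using hv α₀
      | succ j => simpa using hη j
    · rw [linearIndependent_fin_cons]
      constructor
      · let R : (ι → ℂ) →ₗ[ℂ] (ι' → ℂ) :=
          { toFun := fun x β => x β.1
            map_add' := fun _ _ => rfl
            map_smul' := fun _ _ => rfl }
        apply LinearIndependent.of_comp R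
        have hcomp : ⇑R ∘ (fun i => ext0 (ws i)) = ws := by
          funext i
          funext β
          simp only [Function.comp_apply]
          show ext0 (ws i) β.1 = ws i β
          simp only [ext0, dif_neg β.2]; rfl
        rw [hcomp]
        exact hws
      · intro hmem
        have hker : ∀ x ∈ Submodule.span ℂ (Set.range fun i => ext0 (ws i)), x α₀ = 0 := by
          intro x hx
          induction hx using Submodule.span_induction with
          | mem y hy =>
            obtain ⟨i, rfl⟩ := hy
            simp [ext0]
          | zero => rfl
          | add a b _ _ ha hb => simp [ha, hb]
          | smul c a _ ha => simp [ha]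
        have h0 := hker _ hmem
        rw [hw₁0] at h0
        exact one_ne_zero h0
    · intro α
      rw [Fin.sum_univ_succ]
      simp only [Fin.cons_zero, Fin.cons_succ]
      have hIic0 : (Finset.Iic (0 : Fin (k'+1))) = {0} := by
        ext l
        simp [Fin.le_zero_iff]
      rw [hIic0, Finset.prod_singleton, Fin.cons_zero]
      have hprod : ∀ i : Fin k',
          (∏ l ∈ Finset.Iic (Fin.succ i), (Fin.cons (v α₀) η : Fin (k'+1) → A) l)
            = v α₀ * ∏ l ∈ Finset.Iic i, η l := fun i => prod_Iic_cons _ _ i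
      by_cases hα : α = α₀
      · subst hα
        have hz : ∀ i : Fin k', ext0 (ws i) α = 0 := fun i => by simp [ext0]
        simp only [hz, map_zero, mul_zero, Finset.sum_const_zero, add_zero, hw₁0, map_one, mul_one]
      · have hext : ∀ i : Fin k', ext0 (ws i) α = ws i ⟨α, hα⟩ := fun i => by
          simp only [ext0, dif_neg hα]
        calc v α = v α₀ * u α := hu α
        _ = v α₀ * (algebraMap ℂ A (w₁ α) + v' α) := by simp [v']
        _ = v α₀ * algebraMap ℂ A (w₁ α) + v α₀ * v' α := mul_add _ _ _
        _ = v α₀ * algebraMap ℂ A (w₁ α)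
            + v α₀ * ∑ i, (∏ l ∈ Finset.Iic i, η l) * algebraMap ℂ A (ws i ⟨α, hα⟩) := by
          rw [hsum ⟨α, hα⟩]
        _ = v α₀ * algebraMap ℂ A (w₁ α)
            + ∑ i, (∏ l ∈ Finset.Iic (Fin.succ i), (Fin.cons (v α₀) η : Fin (k'+1) → A) l)
              * algebraMap ℂ A (ext0 (ws i) α) := by
          rw [Finset.mul_sum]
          congr 1
          refine Finset.sum_congr rfl fun i _ => ?_
          rw [hprod i, hext i]
          ring

/-- **Canonical finite decomposition of a valued deformation of a Lie algebra.**
Let `μ₀` be a Lie bracket on `ℂⁿ`, `A` a deformation ring over `ℂ` (a valuation domain and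
`ℂ`-algebra whose residue field is `ℂ`) with maximal ideal `m`, and `μ` an `A`-bilinear
antisymmetric bracket on `Aⁿ` satisfying the Jacobi identity which agrees with `μ₀` modulo `m`
on the standard basis vectors.  Then there exist `k`, elements `ε₁,…,ε_k ∈ m` and linearly
independent alternating bilinear maps `φ₁,…,φ_k` on `ℂⁿ` such that
`μ(X,Y) = μ₀(X,Y) + ε₁φ₁(X,Y) + ε₁ε₂φ₂(X,Y) + ⋯ + ε₁⋯ε_kφ_k(X,Y)` for all `X, Y ∈ ℂⁿ`. -/
theorem valued_deformation_canonical_decomposition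
    (n : ℕ) (μ₀ : (Fin n → ℂ) → (Fin n → ℂ) → (Fin n → ℂ))
    (hμ₀ : IsAltBilinearMap n μ₀)
    (hμ₀jac : ∀ X Y Z, μ₀ X (μ₀ Y Z) + μ₀ Y (μ₀ Z X) + μ₀ Z (μ₀ X Y) = 0)
    (A : Type) [CommRing A] [IsDomain A] [ValuationRing A] [Algebra ℂ A]
    (hres : Function.Bijective ((IsLocalRing.residue A).comp (algebraMap ℂ A)))
    (μ : (Fin n → A) → (Fin n → A) → (Fin n → A))
    (hadd₁ : ∀ X X' Y, μ (X + X') Y = μ X Y + μ X' Y)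
    (hsmul₁ : ∀ (a : A) X Y, μ (a • X) Y = a • μ X Y)
    (hadd₂ : ∀ X Y Y', μ X (Y + Y') = μ X Y + μ X Y')
    (hsmul₂ : ∀ (a : A) X Y, μ X (a • Y) = a • μ X Y)
    (hskew : ∀ X Y, μ X Y = - μ Y X)
    (hjac : ∀ X Y Z, μ X (μ Y Z) + μ Y (μ Z X) + μ Z (μ X Y) = 0)
    (hmod : ∀ i j k : Fin n,
      (μ (embed A n (Pi.single i 1)) (embed A n (Pi.single j 1)) k -
        algebraMap ℂ A (μ₀ (Pi.single i 1) (Pi.single j 1) k)) ∈ IsLocalRing.maximalIdeal A) :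
    ∃ (k : ℕ) (ε : Fin k → A) (φ : Fin k → ((Fin n → ℂ) → (Fin n → ℂ) → (Fin n → ℂ))),
      (∀ i, ε i ∈ IsLocalRing.maximalIdeal A) ∧
      (∀ i, IsAltBilinearMap n (φ i)) ∧
      LinearIndependent ℂ φ ∧
      ∀ X Y : Fin n → ℂ,
        μ (embed A n X) (embed A n Y) =
          embed A n (μ₀ X Y) + ∑ i : Fin k, (∏ l ∈ Finset.Iic i, ε l) • embed A n (φ i X Y) := by
  classical
  obtain ⟨hμ₀a1, hμ₀s1, hμ₀a2, hμ₀s2, hμ₀sk⟩ := hμ₀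
  have hinj : Function.Injective (algebraMap ℂ A) := (algebraMap ℂ A).injective
  have two_ne : (2 : A) ≠ 0 := by
    intro h
    have h2 : algebraMap ℂ A 2 = algebraMap ℂ A 0 := by
      rw [map_ofNat, map_zero, h]
    exact two_ne_zero (hinj h2)
  have cancel_self : ∀ x : A, x = -x → x = 0 := by
    intro x h
    have h2 : 2 * x = 0 := by
      rw [two_mul]
      nth_rewrite 2 [h]
      exact add_neg_cancel x
    rcases mul_eq_zero.mp h2 with h' | h'
    exacts [absurd h' two_ne, h']
  have cancel_selfC : ∀ x : ℂ, x = -x → x = 0 := by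
    intro x h
    have h2 : 2 * x = 0 := by
      rw [two_mul]
      nth_rewrite 2 [h]
      exact add_neg_cancel x
    rcases mul_eq_zero.mp h2 with h' | h'
    exacts [absurd h' two_ne_zero, h']
  set e1 : Fin n → (Fin n → ℂ) := fun a => Pi.single a 1 with he1
  set E : Fin n → (Fin n → A) := fun a => embed A n (e1 a) with hE
  set d : Fin n → Fin n → Fin n → A := fun a b c =>
    μ (E a) (E b) c - algebraMap ℂ A (μ₀ (e1 a) (e1 b) c) with hd
  have hdm : ∀ a b c, d a b c ∈ IsLocalRing.maximalIdeal A := by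
    intro a b c
    simp only [hd, hE, he1]
    exact hmod a b c
  have hdskew : ∀ a b c, d b a c = - d a b c := by
    intro a b c
    have h1 : μ (E b) (E a) c = - μ (E a) (E b) c := by
      have := congrFun (hskew (E b) (E a)) c
      simpa using this
    have h2 : μ₀ (e1 b) (e1 a) c = - μ₀ (e1 a) (e1 b) c := by
      have := congrFun (hμ₀sk (e1 b) (e1 a)) c
      simpa using this
    simp only [hd, h1, h2, map_neg]
    ring
  have hddiag : ∀ a c, d a a c = 0 := by
    intro a c
    have h1 : μ (E a) (E a) c = 0 :=
      cancel_self _ (by simpa using congrFun (hskew (E a) (E a)) c)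
    have h2 : μ₀ (e1 a) (e1 a) c = 0 :=
      cancel_selfC _ (by simpa using congrFun (hμ₀sk (e1 a) (e1 a)) c)
    simp [hd, h1, h2]
  set ι := ({p : Fin n × Fin n // p.1 < p.2}) × Fin n with hι
  obtain ⟨k, ε, w, hε, hw, hvsum⟩ := key_decomp A hres (Fintype.card ι) ι inferInstance le_rfl
      (fun q => d q.1.1.1 q.1.1.2 q.2) (fun q => hdm _ _ _)
  set W : Fin k → Fin n → Fin n → Fin n → ℂ := fun i a b c =>
    if h : a < b then w i (⟨(a, b), h⟩, c) else
      if h' : b < a then - w i (⟨(b, a), h'⟩, c) else 0 with hW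
  have hWskew : ∀ i a b c, W i b a c = - W i a b c := by
    intro i a b c
    rcases lt_trichotomy a b with h | rfl | h
    · simp [hW, h, lt_asymm h]
    · simp [hW, lt_irrefl]
    · simp [hW, h, lt_asymm h]
  set φ : Fin k → ((Fin n → ℂ) → (Fin n → ℂ) → (Fin n → ℂ)) :=
    fun i X Y c => ∑ a, ∑ b, X a * Y b * W i a b c with hφdef
  have hdeq : ∀ a b c, d a b c
      = ∑ i, (∏ l ∈ Finset.Iic i, ε l) * algebraMap ℂ A (W i a b c) := by
    intro a b c
    rcases lt_trichotomy a b with h | rfl | h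
    · have h0 := hvsum (⟨⟨(a, b), h⟩, c⟩ : ι)
      simpa [hW, h] using h0
    · simp [hddiag, hW, lt_irrefl]
    · have h0 := hvsum (⟨⟨(b, a), h⟩, c⟩ : ι)
      rw [hdskew b a c, h0, ← Finset.sum_neg_distrib]
      refine Finset.sum_congr rfl fun i _ => ?_
      simp [hW, h, lt_asymm h, map_neg, mul_neg]
  have hsingle : ∀ (g : Fin n → ℂ) (a : Fin n), (∑ x, (Pi.single a 1 : Fin n → ℂ) x * g x) = g a := by
    intro g a
    rw [Finset.sum_eq_single a]
    · simp
    · intro b _ hb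
      simp [Pi.single_eq_of_ne hb]
    · intro h
      exact absurd (Finset.mem_univ a) h
  have hφsingle : ∀ i a b c, φ i (e1 a) (e1 b) c = W i a b c := by
    intro i a b c
    simp only [hφdef, he1]
    calc (∑ x, ∑ y, (Pi.single a 1 : Fin n → ℂ) x * (Pi.single b 1 : Fin n → ℂ) y * W i x y c)
        = ∑ x, (Pi.single a 1 : Fin n → ℂ) x * (∑ y, (Pi.single b 1 : Fin n → ℂ) y * W i x y c) := by
          refine Finset.sum_congr rfl fun x _ => ?_
          rw [Finset.mul_sum]
          exact Finset.sum_congr rfl fun y _ => by ring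
      _ = ∑ x, (Pi.single a 1 : Fin n → ℂ) x * W i x b c := by
          refine Finset.sum_congr rfl fun x _ => ?_
          rw [hsingle (fun y => W i x y c) b]
      _ = W i a b c := hsingle (fun x => W i x b c) a
  have hφalt : ∀ i, IsAltBilinearMap n (φ i) := by
    intro i
    refine ⟨?_, ?_, ?_, ?_, ?_⟩
    · intro X X' Y
      funext c
      simp only [hφdef, Pi.add_apply, add_mul, Finset.sum_add_distrib]
    · intro cc X Y
      funext c
      simp only [hφdef, Pi.smul_apply, smul_eq_mul, Finset.mul_sum]
      exact Finset.sum_congr rfl fun a _ => Finset.sum_congr rfl fun b _ => by ring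
    · intro X Y Y'
      funext c
      simp only [hφdef, Pi.add_apply, mul_add, add_mul, Finset.sum_add_distrib]
    · intro cc X Y
      funext c
      simp only [hφdef, Pi.smul_apply, smul_eq_mul, Finset.mul_sum]
      exact Finset.sum_congr rfl fun a _ => Finset.sum_congr rfl fun b _ => by ring
    · intro X Y
      funext c
      simp only [hφdef, Pi.neg_apply]
      calc (∑ a, ∑ b, X a * Y b * W i a b c)
          = ∑ a, ∑ b, -(Y b * X a * W i b a c) := by
            refine Finset.sum_congr rfl fun a _ => Finset.sum_congr rfl fun b _ => ?_
            rw [hWskew i b a c]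
            ring
        _ = -∑ a, ∑ b, Y b * X a * W i b a c := by
            simp [Finset.sum_neg_distrib]
        _ = -∑ b, ∑ a, Y b * X a * W i b a c := by rw [Finset.sum_comm]
  have hφind : LinearIndependent ℂ φ := by
    let S : ((Fin n → ℂ) → (Fin n → ℂ) → (Fin n → ℂ)) →ₗ[ℂ] (ι → ℂ) :=
      { toFun := fun Φ q => Φ (e1 q.1.1.1) (e1 q.1.1.2) q.2
        map_add' := fun _ _ => rfl
        map_smul' := fun _ _ => rfl }
    apply LinearIndependent.of_comp S
    have hcomp : ⇑S ∘ φ = w := by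
      funext i
      funext q
      obtain ⟨⟨⟨a, b⟩, hab⟩, c⟩ := q
      show φ i (e1 a) (e1 b) c = w i (⟨(a, b), hab⟩, c)
      rw [hφsingle]
      simp [hW, hab]
    rw [hcomp]
    exact hw
  refine ⟨k, ε, φ, hε, hφalt, hφind, ?_⟩
  intro X Y
  have hpi : ∀ Z : Fin n → ℂ, Z = ∑ a, Z a • e1 a := by
    intro Z
    funext j
    rw [Finset.sum_apply, Finset.sum_eq_single j]
    · simp [he1]
    · intro b _ hb
      simp [he1, Pi.single_eq_of_ne (Ne.symm hb)]
    · intro h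
      exact absurd (Finset.mem_univ j) h
  have hembed : ∀ Z : Fin n → ℂ, embed A n Z = ∑ a, algebraMap ℂ A (Z a) • E a := by
    intro Z
    funext j
    rw [Finset.sum_apply, Finset.sum_eq_single j]
    · simp [hE, he1, embed]
    · intro b _ hb
      simp [hE, he1, embed, Pi.single_eq_of_ne (Ne.symm hb)]
    · intro h
      exact absurd (Finset.mem_univ j) h
  have hexpand : μ (embed A n X) (embed A n Y)
      = ∑ a, ∑ b, (algebraMap ℂ A (X a) * algebraMap ℂ A (Y b)) • μ (E a) (E b) := by
    rw [hembed X, hembed Y]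
    exact bilin_expand μ hadd₁ hsmul₁ hadd₂ hsmul₂ _ _ _ _ _ _
  have hexpand0 : μ₀ X Y = ∑ a, ∑ b, (X a * Y b) • μ₀ (e1 a) (e1 b) := by
    conv_lhs => rw [hpi X, hpi Y]
    exact bilin_expand μ₀ hμ₀a1 hμ₀s1 hμ₀a2 hμ₀s2 _ _ _ _ _ _
  funext c
  have hμEab : ∀ a b, μ (E a) (E b) c = algebraMap ℂ A (μ₀ (e1 a) (e1 b) c) + d a b c := by
    intro a b
    simp only [hd]
    ring
  have hL : μ (embed A n X) (embed A n Y) c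
      = (∑ a, ∑ b, algebraMap ℂ A (X a * Y b) * algebraMap ℂ A (μ₀ (e1 a) (e1 b) c))
        + ∑ a, ∑ b, algebraMap ℂ A (X a * Y b) * d a b c := by
    rw [hexpand, Finset.sum_apply, ← Finset.sum_add_distrib]
    refine Finset.sum_congr rfl fun a _ => ?_
    rw [Finset.sum_apply, ← Finset.sum_add_distrib]
    refine Finset.sum_congr rfl fun b _ => ?_
    rw [Pi.smul_apply, smul_eq_mul, hμEab a b, map_mul]
    ring
  have hA1 : (∑ a, ∑ b, algebraMap ℂ A (X a * Y b) * algebraMap ℂ A (μ₀ (e1 a) (e1 b) c))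
      = algebraMap ℂ A (μ₀ X Y c) := by
    have h0 : μ₀ X Y c = ∑ a, ∑ b, X a * Y b * μ₀ (e1 a) (e1 b) c := by
      conv_lhs => rw [hexpand0]
      rw [Finset.sum_apply]
      refine Finset.sum_congr rfl fun a _ => ?_
      rw [Finset.sum_apply]
      refine Finset.sum_congr rfl fun b _ => ?_
      rw [Pi.smul_apply, smul_eq_mul]
    rw [h0, map_sum]
    refine Finset.sum_congr rfl fun a _ => ?_
    rw [map_sum]
    refine Finset.sum_congr rfl fun b _ => ?_
    simp only [map_mul, mul_assoc]
  have hA2 : (∑ a, ∑ b, algebraMap ℂ A (X a * Y b) * d a b c)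
      = ∑ i, (∏ l ∈ Finset.Iic i, ε l) * algebraMap ℂ A (φ i X Y c) := by
    have step1 : ∀ a b, algebraMap ℂ A (X a * Y b) * d a b c
        = ∑ i, (∏ l ∈ Finset.Iic i, ε l) * algebraMap ℂ A (X a * Y b * W i a b c) := by
      intro a b
      rw [hdeq a b c, Finset.mul_sum]
      refine Finset.sum_congr rfl fun i _ => ?_
      simp only [map_mul]
      ring
    calc (∑ a, ∑ b, algebraMap ℂ A (X a * Y b) * d a b c)
        = ∑ a, ∑ b, ∑ i, (∏ l ∈ Finset.Iic i, ε l)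
            * algebraMap ℂ A (X a * Y b * W i a b c) :=
          Finset.sum_congr rfl fun a _ => Finset.sum_congr rfl fun b _ => step1 a b
      _ = ∑ a, ∑ i, ∑ b, (∏ l ∈ Finset.Iic i, ε l)
            * algebraMap ℂ A (X a * Y b * W i a b c) :=
          Finset.sum_congr rfl fun a _ => Finset.sum_comm
      _ = ∑ i, ∑ a, ∑ b, (∏ l ∈ Finset.Iic i, ε l)
            * algebraMap ℂ A (X a * Y b * W i a b c) := Finset.sum_comm
      _ = ∑ i, (∏ l ∈ Finset.Iic i, ε l) * algebraMap ℂ A (φ i X Y c) := by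
          refine Finset.sum_congr rfl fun i _ => ?_
          simp only [hφdef]
          rw [map_sum, Finset.mul_sum]
          refine Finset.sum_congr rfl fun a _ => ?_
          rw [map_sum, Finset.mul_sum]
          
  have hR : (embed A n (μ₀ X Y) + ∑ i, (∏ l ∈ Finset.Iic i, ε l) • embed A n (φ i X Y)) c
      = algebraMap ℂ A (μ₀ X Y c)
        + ∑ i, (∏ l ∈ Finset.Iic i, ε l) * algebraMap ℂ A (φ i X Y c) := by
    rw [Pi.add_apply, Finset.sum_apply]
    congr 1
  rw [hL, hA1, hA2, hR]
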